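/- arXiv:1710.03180 — 3 statements merged into one kernel-verified Lean document; each statement's English description precedes it below -/
import Mathlib

section
/- Let q = sl_n ⋉ (n copies of k^n) where the abelian ideal n·k^n is identified with n×n matrices on which sl_n acts by left multiplication. Then the determinant polynomial on (n·k^n)* ≅ M_n(k), pulled back to q*, is invariant under the coadjoint action of q. -/
open Module Matrix

variable (k : Type*) [Field k] (n : ℕ)

/-- The underlying space of the Lie algebra `q = sl_n ⋉ (n copies of k^n)`, the
abelian ideal being identified with `n×n` matrices on which `sl_n` acts by left
multiplication. -/
abbrev slSemidirect := ↥(LieAlgebra.SpecialLinear.sl (Fin n) k) × Matrix (Fin n) (Fin n) k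

/-- The inverse adjoint action `Ad((g,v)⁻¹)` of an element `(g,v)` of the group
`Q = SL_n ⋉ M_n` on its Lie algebra `q = sl_n ⋉ M_n`:
`(B,Y) ↦ (g⁻¹Bg, g⁻¹Y + g⁻¹Bg·g⁻¹v)`. -/
noncomputable def adInv (g : Matrix.SpecialLinearGroup (Fin n) k)
    (v : Matrix (Fin n) (Fin n) k) : slSemidirect k n →ₗ[k] slSemidirect k n where
  toFun p :=
    (⟨(↑(g⁻¹) : Matrix (Fin n) (Fin n) k) * (p.1 : Matrix (Fin n) (Fin n) k) *
        (↑g : Matrix (Fin n) (Fin n) k), by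
        show _ ∈ LinearMap.ker (Matrix.traceLinearMap (Fin n) k k)
        rw [LinearMap.mem_ker, Matrix.traceLinearMap_apply, Matrix.trace_mul_cycle]
        rw [show ((↑g : Matrix (Fin n) (Fin n) k) * ↑(g⁻¹)) = 1 by
          rw [← Matrix.SpecialLinearGroup.coe_mul, mul_inv_cancel,
            Matrix.SpecialLinearGroup.coe_one]]
        rw [one_mul]
        exact p.1.2⟩,
      (↑(g⁻¹) : Matrix (Fin n) (Fin n) k) * p.2 +
        (↑(g⁻¹) : Matrix (Fin n) (Fin n) k) * (p.1 : Matrix (Fin n) (Fin n) k) * ↑g *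
          ((↑(g⁻¹) : Matrix (Fin n) (Fin n) k) * v))
  map_add' p q := by
    refine Prod.ext (Subtype.ext ?_) ?_ <;>
      simp [Matrix.mul_add, Matrix.add_mul] <;> abel
  map_smul' c p := by
    have hcoe : ∀ x : ↥(LieAlgebra.SpecialLinear.sl (Fin n) k),
        (↑(c • x) : Matrix (Fin n) (Fin n) k) = c • (↑x : Matrix (Fin n) (Fin n) k) :=
      fun _ => rfl
    refine Prod.ext (Subtype.ext ?_) ?_ <;>
      simp [hcoe, Matrix.mul_smul, Matrix.smul_mul, smul_add,
        smul_mul_assoc, mul_smul_comm]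

/-- The determinant on `(n·k^n)* ≅ M_n(k)`, pulled back to `q*`:
the dual of the abelian part is identified with matrices `η` via the trace pairing
`ξ(Y) = tr(ηY)`, i.e. `η_{ij} = ξ(E_{ji})`. -/
noncomputable def detOnDual (ξ : Module.Dual k (slSemidirect k n)) : k :=
  Matrix.det (Matrix.of fun i j : Fin n => ξ (0, Matrix.single j i 1))

/-- The determinant polynomial on the dual of the abelian ideal, pulled back to
`q*`, is invariant under the coadjoint action of `Q = SL_n ⋉ M_n`
(hence of `q = sl_n ⋉ M_n`). -/
theorem det_is_coadjoint_invariant [IsAlgClosed k] [CharZero k]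
    (g : Matrix.SpecialLinearGroup (Fin n) k) (v : Matrix (Fin n) (Fin n) k)
    (ξ : Module.Dual k (slSemidirect k n)) :
    detOnDual k n (ξ ∘ₗ adInv k n g v) = detOnDual k n ξ := by
  classical
  set η : Matrix (Fin n) (Fin n) k :=
    Matrix.of fun i j : Fin n => ξ (0, Matrix.single j i 1) with hη
  have key : (Matrix.of fun i j : Fin n =>
      (ξ ∘ₗ adInv k n g v) (0, Matrix.single j i 1)) =
      η * (↑(g⁻¹) : Matrix (Fin n) (Fin n) k) := by
    ext i j
    have hpair : adInv k n g v (0, Matrix.single j i 1) =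
        ((0 : ↥(LieAlgebra.SpecialLinear.sl (Fin n) k)),
          (↑(g⁻¹) : Matrix (Fin n) (Fin n) k) * Matrix.single j i 1) := by
      refine Prod.ext (Subtype.ext ?_) ?_ <;>
        simp [adInv]
    have hdecomp : (↑(g⁻¹) : Matrix (Fin n) (Fin n) k) * Matrix.single j i 1 =
        ∑ a : Fin n, (↑(g⁻¹) : Matrix (Fin n) (Fin n) k) a j • Matrix.single a i 1 := by
      ext b c
      by_cases hc : c = i <;>
        simp [Matrix.mul_apply, Matrix.single, Matrix.sum_apply, mul_ite,
          ite_and, hc]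
    have hsum : ((0 : ↥(LieAlgebra.SpecialLinear.sl (Fin n) k)),
        (↑(g⁻¹) : Matrix (Fin n) (Fin n) k) * Matrix.single j i 1) =
        ∑ a : Fin n, (↑(g⁻¹) : Matrix (Fin n) (Fin n) k) a j •
          (((0 : ↥(LieAlgebra.SpecialLinear.sl (Fin n) k)),
            Matrix.single a i 1) : slSemidirect k n) := by
      rw [hdecomp]
      refine Prod.ext ?_ ?_ <;>
        simp [Prod.fst_sum, Prod.snd_sum, Matrix.smul_single]
    simp only [LinearMap.comp_apply, Matrix.of_apply, hpair, hsum, map_sum,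
      LinearMap.map_smul, smul_eq_mul]
    simp [Matrix.mul_apply, hη, mul_comm]
  unfold detOnDual
  rw [key, Matrix.det_mul]
  have : Matrix.det (↑(g⁻¹) : Matrix (Fin n) (Fin n) k) = 1 :=
    (g⁻¹).property
  rw [this, mul_one]
end

section
/- In the setting of Raïs–Tauvel polarization, each coefficient F^j(ξ) has the form F^j(ξ) = ⟨(df)_{ξ_m}, ξ_{m-j}⟩ + H_j(ξ_m, …, ξ_{m-j+1}) for some polynomial H_j depending only on the components ξ_m, …, ξ_{m-j+1}. -/
open Module MvPolynomial

variable (k : Type*) [Field k]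

/-- Coordinates of `ξ ∈ q*` w.r.t. a basis of `q`. -/
noncomputable def coords {L ι : Type*} [AddCommGroup L] [Module k L]
    (b : Basis ι k L) (ξ : Module.Dual k L) : ι → k := fun i => ξ (b i)

/-- The Raïs–Tauvel polarization coefficients of `f`:
`f(ξ_m + ε ξ_{m-1} + ⋯ + ε^m ξ_0) = Σ_j F^j(ξ) ε^j`. -/
noncomputable def polarization {L ι : Type*} [AddCommGroup L] [Module k L]
    (b : Basis ι k L) (m : ℕ) (f : MvPolynomial ι k) (j : ℕ)
    (ξ : Fin (m + 1) → Module.Dual k L) : k :=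
  Polynomial.coeff
    (MvPolynomial.aeval
      (fun i : ι => ∑ r : Fin (m + 1),
        Polynomial.C (ξ r (b i)) * Polynomial.X ^ (m - (r : ℕ))) f) j

section Aux

variable {k : Type*} [Field k] {ι : Type*} {m : ℕ}

/-- The universal substituted polynomial for variable `i`. -/
noncomputable def subPoly (k : Type*) [Field k] {ι : Type*} (m : ℕ) (i : ι) :
    Polynomial (MvPolynomial (Fin (m + 1) × ι) k) :=
  ∑ r : Fin (m + 1), Polynomial.C (X (r, i)) * Polynomial.X ^ (m - (r : ℕ))

/-- The universal Raïs–Tauvel substitution. -/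
noncomputable def Φ (k : Type*) [Field k] {ι : Type*} (m : ℕ) :
    MvPolynomial ι k →ₐ[k] Polynomial (MvPolynomial (Fin (m + 1) × ι) k) :=
  aeval (subPoly k m)

lemma coeff_subPoly (i : ι) {c : ℕ} (hc : c ≤ m) :
    (subPoly k m i).coeff c = X (⟨m - c, by omega⟩, i) := by
  classical
  have key : ∀ r : Fin (m + 1), (c = m - (r : ℕ)) = (r = (⟨m - c, by omega⟩ : Fin (m + 1))) := by
    intro r
    have h2 : (r = (⟨m - c, by omega⟩ : Fin (m + 1))) ↔ ((r : ℕ) = m - c) := by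
      constructor
      · intro h; subst h; rfl
      · intro h; exact Fin.ext h
    rw [eq_iff_iff, h2]
    have := r.is_le
    omega
  simp only [subPoly, Polynomial.finset_sum_coeff, Polynomial.coeff_C_mul,
    Polynomial.coeff_X_pow, mul_ite, mul_one, mul_zero, key]
  rw [Finset.sum_ite_eq' Finset.univ]
  simp

lemma Φ_X (i : ι) : Φ k m (X i) = subPoly k m i := aeval_X _ i

/-- Variables appearing in the `c`-th coefficient of `Φ f` have index `≥ m - c`. -/
lemma coeff_Φ_mem (f : MvPolynomial ι k) :
    ∀ c : ℕ, c ≤ m →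
      (Φ k m f).coeff c ∈ supported k {v : Fin (m + 1) × ι | m - c ≤ (v.1 : ℕ)} := by
  classical
  induction f using MvPolynomial.induction_on with
  | C a =>
      intro c _
      have : Φ k m (C a : MvPolynomial ι k) = Polynomial.C (C a) := by
        simp [Φ, algebraMap_eq]
      rw [this, Polynomial.coeff_C]
      split
      · exact Subalgebra.algebraMap_mem _ a
      · exact Subalgebra.zero_mem _
  | add p q hp hq =>
      intro c hc
      rw [map_add, Polynomial.coeff_add]
      exact Subalgebra.add_mem _ (hp c hc) (hq c hc)
  | mul_X p i hp =>
      intro c hc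
      rw [map_mul, Φ_X, Polynomial.coeff_mul]
      refine Subalgebra.sum_mem _ fun x hx => ?_
      rw [Finset.HasAntidiagonal.mem_antidiagonal] at hx
      have h1 : x.1 ≤ c := by omega
      have h2 : x.2 ≤ m := by omega
      rw [coeff_subPoly i h2]
      refine Subalgebra.mul_mem _ (supported_mono ?_ (hp x.1 (le_trans h1 hc))) ?_
      · intro v hv
        simp only [Set.mem_setOf_eq] at hv ⊢
        omega
      · rw [X_mem_supported]
        simp only [Set.mem_setOf_eq]
        omega

lemma coeff_Φ_zero (f : MvPolynomial ι k) :
    (Φ k m f).coeff 0 = rename (fun i : ι => (Fin.last m, i)) f := by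
  classical
  induction f using MvPolynomial.induction_on with
  | C a => simp [Φ, algebraMap_eq]
  | add p q hp hq => simp [map_add, hp, hq]
  | mul_X p i hp =>
      rw [map_mul, Φ_X, Polynomial.mul_coeff_zero, hp, coeff_subPoly i (Nat.zero_le m), map_mul,
        rename_X]
      rfl

lemma rename_last_mem {S : Set (Fin (m + 1) × ι)} (hS : ∀ i : ι, (Fin.last m, i) ∈ S)
    (g : MvPolynomial ι k) : rename (fun i : ι => (Fin.last m, i)) g ∈ supported k S := by
  classical
  rw [mem_supported]
  refine subset_trans (Finset.coe_subset.mpr (vars_rename _ _)) ?_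
  intro v hv
  simp only [Finset.coe_image, Set.mem_image, Finset.mem_coe] at hv
  obtain ⟨i', _, rfl⟩ := hv
  exact hS i'

/-- The key structural lemma, at the universal level. -/
lemma main_lemma [Fintype ι] (f : MvPolynomial ι k) :
    ∀ j : ℕ, (hj : j ≤ m) →
      ∃ R ∈ supported k {v : Fin (m + 1) × ι | m - j + 1 ≤ (v.1 : ℕ) ∨ (v.1 : ℕ) = m},
        (Φ k m f).coeff j =
          (∑ i, rename (fun i' : ι => (Fin.last m, i')) (pderiv i f) *
              X ((⟨m - j, by omega⟩ : Fin (m + 1)), i)) + R := by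
  classical
  have hSlast : ∀ j : ℕ, ∀ i : ι,
      (Fin.last m, i) ∈ {v : Fin (m + 1) × ι | m - j + 1 ≤ (v.1 : ℕ) ∨ (v.1 : ℕ) = m} := by
    intro j i; exact Or.inr (Fin.val_last m)
  induction f using MvPolynomial.induction_on with
  | C a =>
      intro j hj
      refine ⟨(Φ k m (C a : MvPolynomial ι k)).coeff j, ?_, by simp⟩
      have : Φ k m (C a : MvPolynomial ι k) = Polynomial.C (C a) := by
        simp [Φ, algebraMap_eq]
      rw [this, Polynomial.coeff_C]
      split
      · exact Subalgebra.algebraMap_mem _ a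
      · exact Subalgebra.zero_mem _
  | add p q hp hq =>
      intro j hj
      obtain ⟨R₁, hR₁, e₁⟩ := hp j hj
      obtain ⟨R₂, hR₂, e₂⟩ := hq j hj
      refine ⟨R₁ + R₂, Subalgebra.add_mem _ hR₁ hR₂, ?_⟩
      rw [map_add, Polynomial.coeff_add, e₁, e₂]
      simp only [map_add, add_mul, Finset.sum_add_distrib]
      ring
  | mul_X p i hp =>
      intro j hj
      set e : ι → Fin (m + 1) × ι := fun i' => (Fin.last m, i') with he
      set S : Set (Fin (m + 1) × ι) :=
        {v : Fin (m + 1) × ι | m - j + 1 ≤ (v.1 : ℕ) ∨ (v.1 : ℕ) = m} with hSdef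
      -- the linear part of the target
      have target_eq : (∑ i', rename e (pderiv i' (p * X i)) *
            X ((⟨m - j, by omega⟩ : Fin (m + 1)), i')) =
          X (Fin.last m, i) * (∑ i', rename e (pderiv i' p) *
            X ((⟨m - j, by omega⟩ : Fin (m + 1)), i')) +
          rename e p * X ((⟨m - j, by omega⟩ : Fin (m + 1)), i) := by
        have : ∀ i' : ι, rename e (pderiv i' (p * X i)) =
            rename e (pderiv i' p) * X (Fin.last m, i) +
              (if i' = i then rename e p else 0) := by
          intro i'
          rw [pderiv_mul, map_add, map_mul, map_mul, rename_X]
          congr 1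
          by_cases h : i' = i
          · subst h; simp
          · simp [h, pderiv_X_of_ne (Ne.symm h)]
        simp only [this, add_mul, Finset.sum_add_distrib, ite_mul, zero_mul,
          Finset.sum_ite_eq' Finset.univ i]
        simp only [Finset.mem_univ, if_true, Finset.mul_sum]
        congr 1
        exact Finset.sum_congr rfl fun i' _ => by ring
      rcases Nat.eq_zero_or_pos j with hj0 | hjpos
      · -- j = 0 : everything has index m
        subst hj0
        refine ⟨rename e (p * X i) -
            ∑ i', rename e (pderiv i' (p * X i)) *
              X ((⟨m - 0, by omega⟩ : Fin (m + 1)), i'), ?_, ?_⟩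
        · refine Subalgebra.sub_mem _ (rename_last_mem (hSlast 0) _)
            (Subalgebra.sum_mem _ fun i' _ => Subalgebra.mul_mem _
              (rename_last_mem (hSlast 0) _) ?_)
          rw [X_mem_supported]
          exact Or.inr rfl
        · rw [coeff_Φ_zero]
          ring
      · -- j ≥ 1
        obtain ⟨R₁, hR₁, e₁⟩ := hp j hj
        have hmul : (Φ k m (p * X i)).coeff j =
            ∑ x ∈ Finset.HasAntidiagonal.antidiagonal j, (Φ k m p).coeff x.1 *
              X ((⟨m - x.2, by omega⟩ : Fin (m + 1)), i) := by
          rw [map_mul, Φ_X, Polynomial.coeff_mul]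
          refine Finset.sum_congr rfl fun x hx => ?_
          rw [Finset.HasAntidiagonal.mem_antidiagonal] at hx
          rw [coeff_subPoly i (show x.2 ≤ m by omega)]
        have hj0mem : ((j, 0) : ℕ × ℕ) ∈ Finset.HasAntidiagonal.antidiagonal j := by
          rw [Finset.HasAntidiagonal.mem_antidiagonal]
          simp
        have h0jmem : ((0, j) : ℕ × ℕ) ∈ (Finset.HasAntidiagonal.antidiagonal j).erase (j, 0) := by
          rw [Finset.mem_erase, Finset.HasAntidiagonal.mem_antidiagonal]
          constructor
          · intro h
            have := congrArg Prod.fst h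
            simp at this
            omega
          · simp
        set T : MvPolynomial (Fin (m + 1) × ι) k :=
          ∑ x ∈ ((Finset.HasAntidiagonal.antidiagonal j).erase (j, 0)).erase (0, j),
            (Φ k m p).coeff x.1 * X ((⟨m - x.2, by omega⟩ : Fin (m + 1)), i) with hT
        have hsplit : (Φ k m (p * X i)).coeff j =
            (Φ k m p).coeff j * X ((⟨m - 0, by omega⟩ : Fin (m + 1)), i) +
            ((Φ k m p).coeff 0 * X ((⟨m - j, by omega⟩ : Fin (m + 1)), i) + T) := by
          rw [hmul, ← Finset.add_sum_erase _ _ hj0mem, ← Finset.add_sum_erase _ _ h0jmem]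
        have hTmem : T ∈ supported k S := by
          refine Subalgebra.sum_mem _ fun x hx => ?_
          rw [Finset.mem_erase, Finset.mem_erase, Finset.HasAntidiagonal.mem_antidiagonal] at hx
          obtain ⟨hx1, hx2, hx3⟩ := hx
          have hx1' : x.1 ≠ 0 := by
            intro h
            exact hx1 (Prod.ext h (by omega))
          have hx2' : x.2 ≠ 0 := by
            intro h
            exact hx2 (Prod.ext (by omega) h)
          refine Subalgebra.mul_mem _ (supported_mono ?_
            (coeff_Φ_mem p x.1 (by omega))) ?_
          · intro v hv
            simp only [Set.mem_setOf_eq] at hv ⊢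
            left; omega
          · rw [X_mem_supported]
            simp only [hSdef, Set.mem_setOf_eq]
            left; omega
        have hXm0 : ((⟨m - 0, by omega⟩ : Fin (m + 1)), i) = (Fin.last m, i) := rfl
        refine ⟨R₁ * X (Fin.last m, i) + T, Subalgebra.add_mem _
          (Subalgebra.mul_mem _ hR₁ (by rw [X_mem_supported]; exact hSlast j i)) hTmem, ?_⟩
        rw [hsplit, hXm0, e₁, coeff_Φ_zero, target_eq]
        ring

end Aux

/-- Relating `polarization` to the universal substitution. -/
lemma polarization_eq_eval {k : Type*} [Field k] {L ι : Type*} [AddCommGroup L] [Module k L]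
    [Fintype ι] (b : Basis ι k L) (m : ℕ) (f : MvPolynomial ι k) (j : ℕ)
    (ξ : Fin (m + 1) → Module.Dual k L) :
    polarization k b m f j ξ =
      eval (fun v : Fin (m + 1) × ι => ξ v.1 (b v.2)) ((Φ k m f).coeff j) := by
  have key : (MvPolynomial.aeval
      (fun i : ι => ∑ r : Fin (m + 1),
        Polynomial.C (ξ r (b i)) * Polynomial.X ^ (m - (r : ℕ))) f) =
      Polynomial.map (eval (fun v : Fin (m + 1) × ι => ξ v.1 (b v.2))) (Φ k m f) := by
    induction f using MvPolynomial.induction_on with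
    | C a => simp [Φ, algebraMap_eq]
    | add p q hp hq => simp [map_add, Polynomial.map_add, hp, hq]
    | mul_X p i hp =>
        rw [map_mul, map_mul, Φ_X, Polynomial.map_mul, hp, aeval_X]
        congr 1
        simp [subPoly, Polynomial.map_sum]
  rw [polarization, key, Polynomial.coeff_map]

/-- Each polarization coefficient has the form
`F^j(ξ) = ⟨(df)_{ξ_m}, ξ_{m-j}⟩ + H_j(ξ_m,…,ξ_{m-j+1})` for some polynomial `H_j`
depending only on the components `ξ_m, …, ξ_{m-j+1}`. -/
theorem polarization_triangular_form {L ι : Type*} [LieRing L] [LieAlgebra k L]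
    [Fintype ι] (b : Basis ι k L) (m : ℕ) (f : MvPolynomial ι k)
    (hf : ∃ d, f.IsHomogeneous d) :
    ∀ j : ℕ, j ≤ m →
      ∃ H : MvPolynomial (Fin (m + 1) × ι) k,
        (∀ v ∈ H.vars, m - j + 1 ≤ (v.1 : ℕ) ∨ (v.1 : ℕ) = m) ∧
        ∀ ξ : Fin (m + 1) → Module.Dual k L,
          polarization k b m f j ξ =
            (∑ i, MvPolynomial.eval (coords k b (ξ (Fin.last m)))
                (MvPolynomial.pderiv i f) * ξ (⟨m - j, by omega⟩ : Fin (m + 1)) (b i)) +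
              MvPolynomial.eval (fun v : Fin (m + 1) × ι => ξ v.1 (b v.2)) H := by
  intro j hj
  obtain ⟨R, hR, hRe⟩ := main_lemma f j hj
  refine ⟨R, fun v hv => (mem_supported.mp hR) hv, fun ξ => ?_⟩
  rw [polarization_eq_eval, hRe, map_add, map_sum]
  congr 1
  refine Finset.sum_congr rfl fun i _ => ?_
  rw [map_mul, eval_rename, eval_X]
  rfl
end

section
/- Suppose k[q*]^Q = k[f₁,…,f_l] with l = ind q and Ω_{q*} big. For ξ = (ξ_0,…,ξ_m) ∈ q⟨m⟩*, the differentials of the (m+1)l polarizations {F_i^j} at ξ are linearly independent if and only if ξ_m ∈ Ω_{q*}; i.e., Ω_{q⟨m⟩*} = (⊕_{j=0}^{m-1} q_{[j]}*) × Ω_{q*}, which is big in q⟨m⟩*. -/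
open Module MvPolynomial

variable (k : Type*) [Field k]

section Defs

variable {L ι : Type*} [LieRing L] [LieAlgebra k L] [Fintype ι]

/-- The coadjoint stabiliser `q_ξ`. -/
noncomputable def coadStab (ξ : Module.Dual k L) : Submodule k L where
  carrier := {x : L | ∀ y : L, ξ ⁅x, y⁆ = 0}
  add_mem' := by intro a b ha hb y; simp [add_lie, ha y, hb y]
  zero_mem' := by intro y; simp
  smul_mem' := by intro c a ha y; simp [smul_lie, ha y]

/-- The index of `q`: minimal dimension of a coadjoint stabiliser. -/
noncomputable def lieIndex (k L : Type*) [Field k] [LieRing L] [LieAlgebra k L] : ℕ :=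
  sInf {d : ℕ | ∃ ξ : Module.Dual k L, d = Module.finrank k (coadStab k ξ)}

/-- `g ∈ k[q*]` is a symmetric invariant of `q`: in the coordinates given by the
basis `b`, `{g, x} = 0` for every `x ∈ q` (for connected `Q` this is
`Q`-invariance). -/
def IsLieInvariant (b : Basis ι k L) (g : MvPolynomial ι k) : Prop :=
  ∀ (j : ι) (c : ι → k),
    ∑ i, MvPolynomial.eval c (MvPolynomial.pderiv i g) *
      (∑ r, c r * b.repr ⁅b i, b j⁆ r) = 0

/-- The set `Ω_{q*}` of points where the differentials of `f 0, …, f (l-1)` are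
linearly independent. -/
def omegaSet {l : ℕ} (f : Fin l → MvPolynomial ι k) : Set (ι → k) :=
  {c | LinearIndependent k
    (fun t : Fin l => fun i : ι => MvPolynomial.eval c (MvPolynomial.pderiv i (f t)))}

/-- The Takiff bracket on `q⟨m⟩`. -/
def takiffBracket (m : ℕ) (x y : Fin (m + 1) → L) : Fin (m + 1) → L :=
  fun l => ∑ i : Fin (m + 1), ∑ j : Fin (m + 1),
    if (i : ℕ) + (j : ℕ) = (l : ℕ) then ⁅x i, y j⁆ else 0

/-- Pairing of a point of `q⟨m⟩*` (in coordinates) with an element of `q⟨m⟩`. -/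
noncomputable def takiffPairing (b : Basis ι k L) (m : ℕ)
    (c : Fin (m + 1) × ι → k) (x : Fin (m + 1) → L) : k :=
  ∑ p : Fin (m + 1) × ι, c p * b.repr (x p.1) p.2

/-- `F ∈ k[q⟨m⟩*]` is a symmetric invariant of the Takiff algebra `q⟨m⟩`. -/
noncomputable def IsTakiffInvariant (b : Basis ι k L) (m : ℕ)
    (F : MvPolynomial (Fin (m + 1) × ι) k) : Prop :=
  ∀ (p : Fin (m + 1) × ι) (c : Fin (m + 1) × ι → k),
    ∑ q : Fin (m + 1) × ι,
      MvPolynomial.eval c (MvPolynomial.pderiv q F) *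
        takiffPairing k b m c
          (takiffBracket m (Pi.single q.1 (b q.2)) (Pi.single p.1 (b p.2))) = 0

/-- The Raïs–Tauvel polarization `F^j` of `f`, as a polynomial on `q⟨m⟩*`. -/
noncomputable def polarizationPoly (m : ℕ) (f : MvPolynomial ι k) (j : ℕ) :
    MvPolynomial (Fin (m + 1) × ι) k :=
  Polynomial.coeff
    (MvPolynomial.aeval
      (fun i : ι => ∑ r : Fin (m + 1),
        Polynomial.C (MvPolynomial.X (r, i) : MvPolynomial (Fin (m + 1) × ι) k) *
          Polynomial.X ^ (m - (r : ℕ))) f) j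

end Defs

section AuxZero

lemma mv_eq_C_of_totalDegree_eq_zero {k σ : Type*} [CommSemiring k] {p : MvPolynomial σ k}
    (h : p.totalDegree = 0) : p = C (p.coeff 0) := by
  classical
  rw [totalDegree_eq_zero_iff] at h
  ext m
  rcases eq_or_ne m 0 with rfl | hm
  · simp
  · rw [coeff_C, if_neg (Ne.symm hm)]
    by_contra hc
    exact hm (Finsupp.ext fun x => h m (mem_support_iff.mpr hc) x)

lemma exists_nonzero_eval {k σ : Type*} [CommRing k] [IsDomain k] [Infinite k]
    {p : MvPolynomial σ k} (h : p ≠ 0) : ∃ x : σ → k, eval x p ≠ 0 := by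
  by_contra hc
  push_neg at hc
  exact h (MvPolynomial.funext fun x => by simp [hc x])

lemma totalDegree_rename_equiv {k σ τ : Type*} [CommSemiring k] (e : σ ≃ τ)
    (p : MvPolynomial σ k) : (rename (e : σ → τ) p).totalDegree = p.totalDegree := by
  refine le_antisymm (totalDegree_rename_le _ _) ?_
  have h := totalDegree_rename_le (e.symm : τ → σ) (rename (e : σ → τ) p)
  rwa [rename_rename, show ((e.symm : τ → σ) ∘ (e : σ → τ)) = id from funext fun x => e.symm_apply_apply x, rename_id] at h

lemma exists_eval_eq_zero_fin {k : Type*} [Field k] [IsAlgClosed k] :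
    ∀ (n : ℕ) (p : MvPolynomial (Fin n) k), 0 < p.totalDegree → ∃ x, eval x p = 0 := by
  intro n
  induction n with
  | zero =>
    intro p hp
    obtain ⟨a, rfl⟩ := C_surjective (Fin 0) p
    simp at hp
  | succ n ih =>
    intro p hp
    set P := finSuccEquiv k n p with hP
    rcases Nat.eq_zero_or_pos P.natDegree with h0 | hpos
    · have hPC : P = Polynomial.C (P.coeff 0) := Polynomial.eq_C_of_natDegree_eq_zero h0
      have hdeg : 0 < (P.coeff 0).totalDegree := by
        rcases Nat.eq_zero_or_pos (P.coeff 0).totalDegree with h1 | h1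
        · exfalso
          have hcc := mv_eq_C_of_totalDegree_eq_zero h1
          have h2 : p = C ((P.coeff 0).coeff 0) := by
            apply (finSuccEquiv k n).injective
            rw [← hP, hPC, hcc]
            simp [finSuccEquiv_apply]
          rw [h2] at hp; simp at hp
        · exact h1
      obtain ⟨y, hy⟩ := ih (P.coeff 0) hdeg
      refine ⟨Fin.cons 0 y, ?_⟩
      rw [eval_eq_eval_mv_eval', ← hP, hPC]
      simp [hy]
    · have hPne : P ≠ 0 := fun h => by simp [h] at hpos
      have hlc : P.leadingCoeff ≠ 0 := Polynomial.leadingCoeff_ne_zero.mpr hPne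
      obtain ⟨y, hy⟩ := exists_nonzero_eval hlc
      have hQdeg : (P.map (eval y)).natDegree = P.natDegree :=
        Polynomial.natDegree_map_of_leadingCoeff_ne_zero _ hy
      have hd : (P.map (eval y)).degree ≠ 0 :=
        (Polynomial.natDegree_pos_iff_degree_pos.mp (by omega)).ne'
      obtain ⟨x, hx⟩ := IsAlgClosed.exists_root _ hd
      refine ⟨Fin.cons x y, ?_⟩
      rw [eval_eq_eval_mv_eval', ← hP]
      exact hx

lemma exists_eval_eq_zero_alg {k σ : Type*} [Field k] [IsAlgClosed k] [Fintype σ]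
    {p : MvPolynomial σ k} (hp : 0 < p.totalDegree) : ∃ x, eval x p = 0 := by
  classical
  let e := Fintype.equivFin σ
  have hdeg : 0 < (rename (e : σ → Fin (Fintype.card σ)) p).totalDegree := by
    rwa [totalDegree_rename_equiv]
  obtain ⟨x, hx⟩ := exists_eval_eq_zero_fin _ _ hdeg
  exact ⟨x ∘ e, by rwa [eval_rename] at hx⟩

end AuxZero

section AuxD
variable {k}

variable {τ ι : Type*}

noncomputable def Dcq (c : τ → k) (q : τ) (P : Polynomial (MvPolynomial τ k)) : Polynomial k :=
  P.sum fun n a => Polynomial.C (eval c (pderiv q a)) * Polynomial.X ^ n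

lemma Dcq_coeff (c : τ → k) (q : τ) (P : Polynomial (MvPolynomial τ k)) (j : ℕ) :
    (Dcq c q P).coeff j = eval c (pderiv q (P.coeff j)) := by
  classical
  rw [Dcq, Polynomial.sum_def, Polynomial.finset_sum_coeff]
  simp only [Polynomial.coeff_C_mul, Polynomial.coeff_X_pow]
  rw [Finset.sum_eq_single j (fun n _ hn => by simp [Ne.symm hn]) (fun hj => ?_)]
  · simp
  · rw [Polynomial.notMem_support_iff.mp hj]
    simp

lemma Dcq_add (c : τ → k) (q : τ) (P Q : Polynomial (MvPolynomial τ k)) :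
    Dcq c q (P + Q) = Dcq c q P + Dcq c q Q := by
  ext j; simp [Dcq_coeff]

lemma Dcq_mul (c : τ → k) (q : τ) (P Q : Polynomial (MvPolynomial τ k)) :
    Dcq c q (P * Q) = Dcq c q P * Q.map (eval c) + P.map (eval c) * Dcq c q Q := by
  ext j
  rw [Polynomial.coeff_add, Polynomial.coeff_mul, Polynomial.coeff_mul, Dcq_coeff,
    Polynomial.coeff_mul, map_sum, map_sum, ← Finset.sum_add_distrib]
  refine Finset.sum_congr rfl fun x _ => ?_
  simp [Dcq_coeff, pderiv_mul, Polynomial.coeff_map]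
  ring

lemma Dcq_Cmono (c : τ → k) (q : τ) (a : MvPolynomial τ k) (n : ℕ) :
    Dcq c q (Polynomial.C a * Polynomial.X ^ n) =
      Polynomial.C (eval c (pderiv q a)) * Polynomial.X ^ n := by
  ext j
  rw [Dcq_coeff]
  simp only [Polynomial.coeff_C_mul, Polynomial.coeff_X_pow]
  split <;> simp

lemma Dcq_C (c : τ → k) (q : τ) (a : MvPolynomial τ k) :
    Dcq c q (Polynomial.C a) = Polynomial.C (eval c (pderiv q a)) := by
  simpa using Dcq_Cmono c q a 0

/-- `map (eval c)` commutes with `aeval`. -/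
lemma map_eval_aeval (c : τ → k) (Φ : ι → Polynomial (MvPolynomial τ k))
    (f : MvPolynomial ι k) :
    (aeval Φ f).map (eval c) = aeval (fun i => (Φ i).map (eval c)) f := by
  induction f using MvPolynomial.induction_on with
  | C a => simp [algebraMap_eq]
  | add p q hp hq => simp [hp, hq]
  | mul_X p i hp => simp [hp]

/-- Chain rule for `Dcq` applied to a polynomial substitution. -/
lemma Dcq_aeval [Fintype ι] [DecidableEq ι] (c : τ → k) (q : τ)
    (Φ : ι → Polynomial (MvPolynomial τ k)) (f : MvPolynomial ι k) :
    Dcq c q (aeval Φ f) =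
      ∑ i, aeval (fun i' => (Φ i').map (eval c)) (pderiv i f) * Dcq c q (Φ i) := by
  induction f using MvPolynomial.induction_on with
  | C a => simp [algebraMap_eq, Dcq_C]
  | add p r hp hr =>
    simp only [map_add, Dcq_add, hp, hr, ← Finset.sum_add_distrib]
    refine Finset.sum_congr rfl fun i _ => by ring
  | mul_X p i₀ hp =>
    rw [map_mul, aeval_X, Dcq_mul, hp, map_eval_aeval]
    have hX : ∀ i : ι, pderiv i (p * X i₀) =
        pderiv i p * X i₀ + (if i₀ = i then p else 0) := by
      intro i
      rw [pderiv_mul]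
      congr 1
      rcases eq_or_ne i₀ i with rfl | h
      · simp
      · simp [h]
    simp only [hX, map_add, map_mul, aeval_X, add_mul]
    rw [Finset.sum_add_distrib, Finset.sum_mul]
    refine congrArg₂ (· + ·) ?_ ?_
    · refine Finset.sum_congr rfl fun i _ => by ring
    · have h1 : ∀ i ∈ Finset.univ,
          (aeval fun i' => (Φ i').map (eval c)) (if i₀ = i then p else 0) * Dcq c q (Φ i)
            = if i = i₀ then (aeval fun i' => (Φ i').map (eval c)) p * Dcq c q (Φ i) else 0 := by
        intro i _
        rcases eq_or_ne i i₀ with rfl | h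
        · simp
        · simp [Ne.symm h, h]
      rw [Finset.sum_congr rfl h1, Finset.sum_ite_eq' Finset.univ i₀]
      simp

lemma Dcq_sum {A : Type*} (c : τ → k) (q : τ) (s : Finset A)
    (g : A → Polynomial (MvPolynomial τ k)) :
    Dcq c q (∑ a ∈ s, g a) = ∑ a ∈ s, Dcq c q (g a) := by
  ext j
  simp [Dcq_coeff, Polynomial.finset_sum_coeff, map_sum]


end AuxD

section Key
variable {k}
variable {ι : Type*} [Fintype ι] {m : ℕ}

/-- The point `ξ` of `q⟨m⟩*` as a tuple of `Polynomial k`s. -/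
noncomputable def sigc (c : Fin (m + 1) × ι → k) (i : ι) : Polynomial k :=
  ∑ r : Fin (m + 1), Polynomial.C (c (r, i)) * Polynomial.X ^ (m - (r : ℕ))

lemma key_formula (c : Fin (m + 1) × ι → k) (r₀ : Fin (m + 1)) (i₀ : ι)
    (f : MvPolynomial ι k) (j : ℕ) :
    eval c (pderiv (r₀, i₀) (polarizationPoly k m f j)) =
      ((aeval (sigc c) (pderiv i₀ f) : Polynomial k) *
        Polynomial.X ^ (m - (r₀ : ℕ))).coeff j := by
  classical
  set Φ : ι → Polynomial (MvPolynomial (Fin (m + 1) × ι) k) := fun i =>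
    ∑ r : Fin (m + 1), Polynomial.C (X (r, i)) * Polynomial.X ^ (m - (r : ℕ)) with hΦ
  have h1 : eval c (pderiv (r₀, i₀) (polarizationPoly k m f j)) =
      (Dcq c (r₀, i₀) (aeval Φ f)).coeff j := by
    rw [Dcq_coeff]; rfl
  have hmap : ∀ i, (Φ i).map (eval c) = sigc c i := by
    intro i
    simp [hΦ, sigc, Polynomial.map_sum]
  have hDΦ : ∀ i, Dcq c (r₀, i₀) (Φ i) =
      if i = i₀ then (Polynomial.X : Polynomial k) ^ (m - (r₀ : ℕ)) else 0 := by
    intro i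
    rw [hΦ]
    simp only []
    rw [Dcq_sum]
    rcases eq_or_ne i i₀ with rfl | h
    · rw [if_pos rfl]
      rw [Finset.sum_congr rfl (fun r _ => Dcq_Cmono c (r₀, i) (X (r, i)) (m - (r : ℕ)))]
      rw [Finset.sum_eq_single r₀]
      · simp
      · intro r _ hr
        rw [pderiv_X]
        rw [Pi.single_eq_of_ne (by simpa using hr)]
        simp
      · simp
    · rw [if_neg h]
      rw [Finset.sum_congr rfl (fun r _ => Dcq_Cmono c (r₀, i₀) (X (r, i)) (m - (r : ℕ)))]
      refine Finset.sum_eq_zero fun r _ => ?_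
      rw [pderiv_X, Pi.single_eq_of_ne (by simp [h])]
      simp
  rw [h1, Dcq_aeval]
  simp only [hmap, hDΦ, mul_ite, mul_zero]
  rw [Finset.sum_ite_eq' Finset.univ i₀]
  simp

lemma aeval_sigc_coeff_zero (c : Fin (m + 1) × ι → k) (g : MvPolynomial ι k) :
    ((aeval (sigc c) g : Polynomial k)).coeff 0 =
      eval (fun i => c (Fin.last m, i)) g := by
  rw [Polynomial.coeff_zero_eq_eval_zero]
  have h := map_aeval (sigc c) (Polynomial.evalRingHom (0 : k)) g
  rw [show ((Polynomial.evalRingHom (0 : k)) ((aeval (sigc c)) g) : k)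
      = Polynomial.eval 0 ((aeval (sigc c)) g) from rfl] at h
  rw [h]
  have h2 : ∀ i, (Polynomial.evalRingHom (0 : k)) (sigc c i) = c (Fin.last m, i) := by
    intro i
    show Polynomial.eval (0 : k) (sigc c i) = _
    rw [sigc, Polynomial.eval_finset_sum]
    rw [Finset.sum_eq_single (Fin.last m)]
    · simp
    · intro r _ hr
      have : 0 < m - (r : ℕ) := by
        have hr' : (r : ℕ) < m + 1 := r.isLt
        have : (r : ℕ) ≠ m := fun hc => hr (Fin.ext (by simp [hc]))
        omega
      simp [zero_pow this.ne']
    · exact fun h => absurd (Finset.mem_univ _) h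
  simp only [h2]
  rw [show ((Polynomial.evalRingHom (0 : k)).comp (algebraMap k (Polynomial k)))
      = RingHom.id k from RingHom.ext fun a => by simp]
  rfl
end Key



/-- In the setting of the main theorem, the differentials of the `(m+1)l`
polarizations `F_i^j` at `ξ = (ξ_0,…,ξ_m) ∈ q⟨m⟩*` are linearly independent iff
`ξ_m ∈ Ω_{q*}`; i.e. `Ω_{q⟨m⟩*} = (⊕_{j<m} q_{[j]}*) × Ω_{q*}`, and this set is
big in `q⟨m⟩*`. -/
theorem takiff_omega_eq_and_big (L ι : Type*) [IsAlgClosed k] [CharZero k]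
    [LieRing L] [LieAlgebra k L] [Fintype ι] (b : Basis ι k L)
    (l : ℕ) (f : Fin l → MvPolynomial ι k)
    (hl : l = lieIndex k L)
    (hhom : ∀ t, ∃ d, (f t).IsHomogeneous d)
    (hinv : ∀ t, IsLieInvariant k b (f t))
    (halg : AlgebraicIndependent k f)
    (hgen : ∀ g : MvPolynomial ι k,
      IsLieInvariant k b g ↔ g ∈ Algebra.adjoin k (Set.range f))
    (hbig : ∀ g : MvPolynomial ι k, 0 < g.totalDegree →
      ∃ c, MvPolynomial.eval c g = 0 ∧ c ∈ omegaSet k f)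
    (m : ℕ) (hm : 1 ≤ m) :
    (∀ c : Fin (m + 1) × ι → k,
      LinearIndependent k
        (fun p : Fin l × Fin (m + 1) => fun q : Fin (m + 1) × ι =>
          MvPolynomial.eval c
            (MvPolynomial.pderiv q (polarizationPoly k m (f p.1) (p.2 : ℕ)))) ↔
        (fun i : ι => c (Fin.last m, i)) ∈ omegaSet k f) ∧
    (∀ G : MvPolynomial (Fin (m + 1) × ι) k, 0 < G.totalDegree →
      ∃ c : Fin (m + 1) × ι → k, MvPolynomial.eval c G = 0 ∧
        (fun i : ι => c (Fin.last m, i)) ∈ omegaSet k f) := by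
  classical
  have hK : ∀ (c : Fin (m + 1) × ι → k) (t : Fin l) (j₀ : ℕ) (q : Fin (m + 1) × ι),
      eval c (pderiv q (polarizationPoly k m (f t) j₀)) =
        ((aeval (sigc c) (pderiv q.2 (f t)) : Polynomial k) *
          Polynomial.X ^ (m - (q.1 : ℕ))).coeff j₀ := fun c t j₀ q => key_formula c q.1 q.2 (f t) j₀
  constructor
  · intro c
    set cm : ι → k := fun i => c (Fin.last m, i) with hcm
    constructor
    · -- linear independence of polarizations implies cm ∈ Ω
      intro hLI
      set S : (ι → k) →ₗ[k] (Fin (m + 1) × ι → k) :=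
        { toFun := fun v q => if q.1 = Fin.last m then v q.2 else 0
          map_add' := by
            intro a b; funext q; by_cases h : q.1 = Fin.last m <;> simp [h]
          map_smul' := by
            intro a b; funext q; by_cases h : q.1 = Fin.last m <;> simp [h] } with hS
      have hsub := hLI.comp (fun t : Fin l => (t, (0 : Fin (m + 1))))
        (fun a b hab => by simpa using congrArg Prod.fst hab)
      show LinearIndependent k
        (fun t : Fin l => fun i : ι => eval (fun i => c (Fin.last m, i)) (pderiv i (f t)))
      refine LinearIndependent.of_comp S ?_
      convert hsub using 1
      funext t q
      simp only [Function.comp_apply]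
      rw [hK]
      obtain ⟨r, i⟩ := q
      rcases eq_or_ne r (Fin.last m) with rfl | hr
      · rw [show (m - ((Fin.last m : Fin (m + 1)) : ℕ)) = 0 by simp, pow_zero, mul_one]
        rw [show (((0 : Fin (m + 1))) : ℕ) = 0 from rfl, aeval_sigc_coeff_zero]
        simp [hS]
      · rw [Polynomial.coeff_mul_X_pow', if_neg (by
          show ¬ (m - (r : ℕ) ≤ (((0 : Fin (m + 1))) : ℕ))
          rw [show (((0 : Fin (m + 1))) : ℕ) = 0 from rfl]
          have h1 := r.isLt
          have h2 : (r : ℕ) ≠ m := fun hc => hr (Fin.ext (by simp [hc]))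
          omega)]
        simp [hS, hr]
    · -- cm ∈ Ω implies linear independence
      intro hΩ
      have HΩ := Fintype.linearIndependent_iff.mp hΩ
      rw [Fintype.linearIndependent_iff]
      intro g hg
      have hgq : ∀ q : Fin (m + 1) × ι, (∑ p : Fin l × Fin (m + 1),
          g p * eval c (pderiv q (polarizationPoly k m (f p.1) ((p.2 : ℕ))))) = 0 := by
        intro q
        have := congrFun hg q
        rw [Finset.sum_apply] at this
        simpa [smul_eq_mul] using this
      have A : ∀ s : ℕ, ∀ j₀ : Fin (m + 1), (j₀ : ℕ) + s = m → ∀ t, g (t, j₀) = 0 := by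
        intro s
        induction s using Nat.strong_induction_on with
        | _ s IH =>
          intro j₀ hj₀ t
          have hrel : ∀ i : ι, (∑ t' : Fin l, g (t', j₀) * eval cm (pderiv i (f t'))) = 0 := by
            intro i
            have h := hgq (⟨s, by omega⟩, i)
            rw [Fintype.sum_prod_type] at h
            have hinner : ∀ t' ∈ Finset.univ, (∑ j : Fin (m + 1),
                g (t', j) * eval c (pderiv ((⟨s, by omega⟩ : Fin (m + 1)), i)
                  (polarizationPoly k m (f t') ((j : ℕ)))))
                = g (t', j₀) * eval cm (pderiv i (f t')) := by
              intro t' _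
              rw [Finset.sum_eq_single j₀]
              · congr 1
                rw [hK, Polynomial.coeff_mul_X_pow', if_pos (by simp; omega)]
                rw [show ((j₀ : ℕ) - (m - ((⟨s, by omega⟩ : Fin (m + 1)) : ℕ))) = 0 by simp; omega]
                rw [aeval_sigc_coeff_zero]
              · intro j _ hj
                rcases lt_or_gt_of_ne (fun hc : (j : ℕ) = (j₀ : ℕ) => hj (Fin.ext hc)) with hlt | hgt
                · rw [hK, Polynomial.coeff_mul_X_pow', if_neg (by simp; omega), mul_zero]
                · rw [IH (m - (j : ℕ)) (by omega) j (by have := j.isLt; omega) t', zero_mul]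
              · exact fun h => absurd (Finset.mem_univ _) h
            rw [Finset.sum_congr rfl hinner] at h
            exact h
          have := HΩ (fun t' => g (t', j₀)) ?_ t
          · exact this
          · funext i
            rw [Finset.sum_apply]
            simpa [smul_eq_mul] using hrel i
      intro p
      obtain ⟨t, j⟩ := p
      exact A (m - (j : ℕ)) j (by have := j.isLt; omega) t
  · -- bigness
    intro G hG
    rcases isEmpty_or_nonempty ι with hι | hι
    · exfalso
      obtain ⟨a, rfl⟩ := C_surjective (Fin (m + 1) × ι) G
      simp [totalDegree_C] at hG
    · obtain ⟨i₀⟩ := hι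
      obtain ⟨c₀, _, hc₀⟩ := hbig (X i₀) (by simp [totalDegree_X])
      set φ : (Fin (m + 1) × ι → k) → (Fin (m + 1) × ι) → MvPolynomial ι k :=
        fun a p => if p.1 = Fin.last m then X p.2 else C (a p) with hφ
      have comb : ∀ (a : Fin (m + 1) × ι → k) (cm' : ι → k),
          eval (fun p : Fin (m + 1) × ι => if p.1 = Fin.last m then cm' p.2 else a p) G
            = eval cm' (aeval (φ a) G) := by
        intro a cm'
        rw [aeval_def, algebraMap_eq, eval₂_comp_left (eval cm') C (φ a) G]
        have e1 : (eval cm').comp (C : k →+* MvPolynomial ι k) = RingHom.id k :=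
          RingHom.ext fun x => by simp
        have e2 : (⇑(eval cm') ∘ φ a) =
            fun p : Fin (m + 1) × ι => if p.1 = Fin.last m then cm' p.2 else a p :=
          funext fun p => by by_cases hp : p.1 = Fin.last m <;> simp [hφ, hp]
        rw [e1, e2]
        rfl
      by_cases hcase : ∃ a, aeval (φ a) G = 0 ∨ 0 < (aeval (φ a) G).totalDegree
      · obtain ⟨a, ha⟩ := hcase
        rcases ha with h0 | hpos
        · refine ⟨fun p => if p.1 = Fin.last m then c₀ p.2 else a p, ?_, ?_⟩
          · rw [comb, h0, map_zero]
          · rw [show (fun i => (fun p : Fin (m + 1) × ι =>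
                if p.1 = Fin.last m then c₀ p.2 else a p) (Fin.last m, i)) = c₀
              from funext fun i => if_pos rfl]
            exact hc₀
        · obtain ⟨cm', hcm0, hcmΩ⟩ := hbig _ hpos
          refine ⟨fun p => if p.1 = Fin.last m then cm' p.2 else a p, ?_, ?_⟩
          · rw [comb]; exact hcm0
          · rw [show (fun i => (fun p : Fin (m + 1) × ι =>
                if p.1 = Fin.last m then cm' p.2 else a p) (Fin.last m, i)) = cm'
              from funext fun i => if_pos rfl]
            exact hcmΩ
      · exfalso
        push_neg at hcase
        obtain ⟨x, hx⟩ := exists_eval_eq_zero_alg hG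
        obtain ⟨h1, h2⟩ := hcase x
        have h2' : (aeval (φ x) G).totalDegree = 0 := Nat.le_zero.mp h2
        have hC := mv_eq_C_of_totalDegree_eq_zero h2'
        have hcomb := comb x (fun i => x (Fin.last m, i))
        have hfun : (fun p : Fin (m + 1) × ι =>
            if p.1 = Fin.last m then x (Fin.last m, p.2) else x p) = x := by
          funext p
          obtain ⟨r, i⟩ := p
          by_cases h : r = Fin.last m <;> simp [h]
        rw [hfun] at hcomb
        rw [hcomb, hC] at hx
        rw [eval_C] at hx
        exact h1 (by rw [hC, hx, map_zero])
end
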